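/- Let X be a real-valued random variable with E X = 0, Var X ≤ σ², and X ≤ d almost surely, where σ > 0 and d > 0 are constants. Set a := σ²/d², and let X_a be a random variable taking the values -a and 1 with probabilities 1/(1+a) and a/(1+a), respectively. Then for every t ∈ ℝ, E (X - t)₊² ≤ E (d·X_a - t)₊². -/

import Mathlib

open MeasureTheory

private lemma two_point_integral {Ω' : Type*} [MeasurableSpace Ω'] (μ' : Measure Ω')
    [IsProbabilityMeasure μ']
    (Xa : Ω' → ℝ) (hXam : Measurable Xa) (a : ℝ) (ha' : 0 < a)
    (hXa1 : μ' {ω' | Xa ω' = -a} = ENNReal.ofReal (1 / (1 + a)))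
    (hXa2 : μ' {ω' | Xa ω' = 1} = ENNReal.ofReal (a / (1 + a)))
    (F : ℝ → ℝ) :
    ∫ ω', F (Xa ω') ∂μ' = (1/(1+a)) * F (-a) + (a/(1+a)) * F 1 := by
  have h1a : (0:ℝ) < 1 + a := by linarith
  set S1 : Set Ω' := {ω' | Xa ω' = -a} with hS1
  set S2 : Set Ω' := {ω' | Xa ω' = 1} with hS2
  have hmS1 : MeasurableSet S1 := hXam (measurableSet_singleton (-a))
  have hmS2 : MeasurableSet S2 := hXam (measurableSet_singleton 1)
  have hne : (-a : ℝ) ≠ 1 := by linarith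
  have hdisj : Disjoint S1 S2 := by
    rw [Set.disjoint_left]
    intro ω h1 h2
    exact hne (h1.symm.trans h2)
  have hunion : μ' (S1 ∪ S2) = 1 := by
    rw [measure_union hdisj hmS2, hXa1, hXa2,
      ← ENNReal.ofReal_add (by positivity) (by positivity)]
    rw [← add_div, div_self (by linarith)]
    simp
  have hcompl : μ' (S1 ∪ S2)ᶜ = 0 := by
    rw [measure_compl (hmS1.union hmS2) (measure_ne_top _ _), hunion]
    simp
  have hae : ∀ᵐ ω' ∂μ', Xa ω' = -a ∨ Xa ω' = 1 := by
    rw [ae_iff]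
    convert hcompl using 2
    ext ω; simp [hS1, hS2]
  have hcongr : (fun ω' => F (Xa ω')) =ᵐ[μ']
      (fun ω' => S1.indicator (fun _ => F (-a)) ω' + S2.indicator (fun _ => F 1) ω') := by
    filter_upwards [hae] with ω' h
    rcases h with h | h
    · have h1 : ω' ∈ S1 := h
      have h2 : ω' ∉ S2 := fun h2 => hne (h.symm.trans h2)
      simp [Set.indicator_of_mem h1, Set.indicator_of_notMem h2, h]
    · have h2 : ω' ∈ S2 := h
      have h1 : ω' ∉ S1 := fun h1 => hne (h1.symm.trans h)
      simp [Set.indicator_of_mem h2, Set.indicator_of_notMem h1, h]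
  rw [integral_congr_ae hcongr, integral_add
      ((integrable_const _).indicator hmS1) ((integrable_const _).indicator hmS2),
    integral_indicator_const _ hmS1, integral_indicator_const _ hmS2,
    measureReal_def, measureReal_def, hXa1, hXa2, ENNReal.toReal_ofReal (by positivity), ENNReal.toReal_ofReal (by positivity)]
  simp [mul_comm]

theorem stmt_1 {Ω : Type*} [MeasurableSpace Ω] (μ : Measure Ω) [IsProbabilityMeasure μ]
    (X : Ω → ℝ) (hXm : Measurable X) (hX2 : MemLp X 2 μ)
    (σ d : ℝ) (hσ : 0 < σ) (hd : 0 < d)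
    (hmean : ∫ ω, X ω ∂μ = 0) (hvar : ProbabilityTheory.variance X μ ≤ σ ^ 2)
    (hbd : ∀ᵐ ω ∂μ, X ω ≤ d)
    (a : ℝ) (ha : a = σ ^ 2 / d ^ 2)
    {Ω' : Type*} [MeasurableSpace Ω'] (μ' : Measure Ω') [IsProbabilityMeasure μ']
    (Xa : Ω' → ℝ) (hXam : Measurable Xa)
    (hXa1 : μ' {ω' | Xa ω' = -a} = ENNReal.ofReal (1 / (1 + a)))
    (hXa2 : μ' {ω' | Xa ω' = 1} = ENNReal.ofReal (a / (1 + a))) :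
    ∀ t : ℝ,
      ∫ ω, (max (X ω - t) 0) ^ 2 ∂μ ≤ ∫ ω', (max (d * Xa ω' - t) 0) ^ 2 ∂μ' := by
  intro t
  have ha' : 0 < a := ha ▸ div_pos (pow_pos hσ 2) (pow_pos hd 2)
  have h1a : (0:ℝ) < 1 + a := by linarith
  have h1a' : (1:ℝ) + a ≠ 0 := ne_of_gt h1a
  have hd' : d ≠ 0 := ne_of_gt hd
  have hσ2 : σ ^ 2 = a * d ^ 2 := by rw [ha]; field_simp
  have hdc : (0:ℝ) < d + d * a := by positivity
  have hdc' : d + d * a ≠ 0 := ne_of_gt hdc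
  have hIX : Integrable X μ := hX2.integrable one_le_two
  have hIX2 : Integrable (fun ω => (X ω)^2) μ := by
    have := hX2.integrable_sq
    simpa [Pi.pow_apply] using this
  have hEX2 : ∫ ω, (X ω)^2 ∂μ ≤ σ^2 := by
    have hv := ProbabilityTheory.variance_eq_sub hX2
    simp only [Pi.pow_apply, hmean] at hv
    simp at hv
    linarith
  have hRHS : ∫ ω', (max (d * Xa ω' - t) 0) ^ 2 ∂μ'
      = (1/(1+a)) * (max (d * (-a) - t) 0)^2 + (a/(1+a)) * (max (d * 1 - t) 0)^2 :=
    two_point_integral μ' Xa hXam a ha' hXa1 hXa2 (fun y => (max (d * y - t) 0)^2)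
  rcases le_or_gt d t with hcase | hcase
  · -- t ≥ d : left side is 0
    have hz : (fun ω => (max (X ω - t) 0)^2) =ᵐ[μ] (fun _ => (0:ℝ)) := by
      filter_upwards [hbd] with ω hω
      rw [max_eq_right (by linarith)]
      norm_num
    rw [integral_congr_ae hz, integral_const]
    simp only [smul_eq_mul, mul_zero]
    exact integral_nonneg fun ω' => by positivity
  · rcases le_or_gt (-(d*a)) t with h2 | h2
    · -- -(d*a) ≤ t < d
      set k : ℝ := (d - t) / (d + d * a) with hk
      have hpt : ∀ᵐ ω ∂μ, (max (X ω - t) 0)^2 ≤ k^2 * (X ω + d*a)^2 := by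
        filter_upwards [hbd] with ω hω
        rcases le_or_gt (X ω) t with h | h
        · rw [max_eq_right (by linarith)]
          norm_num
          positivity
        · rw [max_eq_left (by linarith)]
          have key : (X ω - t) * (d + d*a) ≤ (X ω + d*a) * (d - t) := by nlinarith
          have hA : (0:ℝ) ≤ (X ω - t) * (d + d*a) := mul_nonneg (by linarith) hdc.le
          have hB : (0:ℝ) ≤ (X ω + d*a) * (d - t) := by nlinarith
          rw [hk, div_pow, div_mul_eq_mul_div, le_div_iff₀ (by positivity)]
          nlinarith [mul_nonneg (sub_nonneg.2 key) (by linarith : (0:ℝ) ≤ (X ω + d*a) * (d - t) + (X ω - t) * (d + d*a))]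
      have hIq : Integrable (fun ω => k^2 * (X ω + d*a)^2) μ := by
        have heq : (fun ω => k^2 * (X ω + d*a)^2)
            = fun ω => k^2 * (X ω)^2 + (2*k^2*(d*a)) * X ω + k^2*(d*a)^2 := by
          funext ω; ring
        rw [heq]
        exact ((hIX2.const_mul _).add (hIX.const_mul _)).add (integrable_const _)
      have hval : ∫ ω, k^2 * (X ω + d*a)^2 ∂μ
          = k^2 * ((∫ ω, (X ω)^2 ∂μ) + (d*a)^2) := by
        have heq : (fun ω => k^2 * (X ω + d*a)^2)
            = fun ω => k^2 * (X ω)^2 + ((2*k^2*(d*a)) * X ω + k^2*(d*a)^2) := by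
          funext ω; ring
        have hI1 : Integrable (fun ω => k^2 * (X ω)^2) μ := hIX2.const_mul _
        have hI2a : Integrable (fun ω => (2*k^2*(d*a)) * X ω) μ := hIX.const_mul _
        have hI2b : Integrable (fun ω => (k^2*(d*a)^2 : ℝ)) μ := integrable_const _
        have hI2 : Integrable (fun ω => (2*k^2*(d*a)) * X ω + k^2*(d*a)^2) μ := hI2a.add hI2b
        rw [heq, integral_add hI1 hI2, integral_add hI2a hI2b,
          integral_const_mul, integral_const_mul, integral_const, hmean]
        simp
        ring
      have hstep : ∫ ω, (max (X ω - t) 0)^2 ∂μ ≤ k^2 * ((∫ ω, (X ω)^2 ∂μ) + (d*a)^2) := by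
        rw [← hval]
        exact integral_mono_of_nonneg (Filter.Eventually.of_forall fun ω => by positivity) hIq hpt
      have hm1 : max (d * (-a) - t) 0 = 0 := max_eq_right (by simp only [mul_neg]; linarith)
      have hm2 : max (d * 1 - t) 0 = d * 1 - t := max_eq_left (by simp only [mul_one]; linarith)
      rw [hRHS, hm1, hm2]
      have hfin : k^2 * (a*d^2 + (d*a)^2) = a/(1+a) * (d*1 - t)^2 := by
        rw [hk, div_pow]
        field_simp
      calc ∫ ω, (max (X ω - t) 0)^2 ∂μ ≤ k^2 * ((∫ ω, (X ω)^2 ∂μ) + (d*a)^2) := hstep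
        _ ≤ k^2 * (a*d^2 + (d*a)^2) := by
            apply mul_le_mul_of_nonneg_left _ (sq_nonneg k)
            linarith
        _ = a/(1+a) * (d*1 - t)^2 := hfin
        _ ≤ (1/(1+a)) * 0^2 + (a/(1+a)) * (d*1 - t)^2 := by norm_num
    · -- t < -(d*a)
      have hpt : ∀ᵐ ω ∂μ, (max (X ω - t) 0)^2 ≤ (X ω - t)^2 := by
        filter_upwards with ω
        rcases le_or_gt (X ω) t with h | h
        · rw [max_eq_right (by linarith)]
          norm_num
          positivity
        · rw [max_eq_left (by linarith)]
      have hIq : Integrable (fun ω => (X ω - t)^2) μ := by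
        have heq : (fun ω => (X ω - t)^2)
            = fun ω => (X ω)^2 + ((-2*t) * X ω + t^2) := by
          funext ω; ring
        rw [heq]
        exact hIX2.add ((hIX.const_mul _).add (integrable_const _))
      have hval : ∫ ω, (X ω - t)^2 ∂μ = (∫ ω, (X ω)^2 ∂μ) + t^2 := by
        have heq : (fun ω => (X ω - t)^2)
            = fun ω => (X ω)^2 + ((-2*t) * X ω + t^2) := by
          funext ω; ring
        have hI2a : Integrable (fun ω => (-2*t) * X ω) μ := hIX.const_mul _
        have hI2b : Integrable (fun ω => (t^2 : ℝ)) μ := integrable_const _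
        have hI2 : Integrable (fun ω => (-2*t) * X ω + t^2) μ := hI2a.add hI2b
        rw [heq, integral_add hIX2 hI2, integral_add hI2a hI2b,
          integral_const_mul, integral_const, hmean]
        simp
      have hstep : ∫ ω, (max (X ω - t) 0)^2 ∂μ ≤ (∫ ω, (X ω)^2 ∂μ) + t^2 := by
        rw [← hval]
        exact integral_mono_of_nonneg (Filter.Eventually.of_forall fun ω => by positivity) hIq hpt
      have hm1 : max (d * (-a) - t) 0 = d * (-a) - t := max_eq_left (by simp only [mul_neg]; linarith)
      have hm2 : max (d * 1 - t) 0 = d * 1 - t := max_eq_left (by simp only [mul_one]; linarith)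
      rw [hRHS, hm1, hm2]
      have hfin : a*d^2 + t^2 = (1/(1+a)) * (d*(-a) - t)^2 + (a/(1+a)) * (d*1 - t)^2 := by
        field_simp
        ring
      calc ∫ ω, (max (X ω - t) 0)^2 ∂μ ≤ (∫ ω, (X ω)^2 ∂μ) + t^2 := hstep
        _ ≤ a*d^2 + t^2 := by linarith
        _ = _ := hfin
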